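/- For all x3, x4, x5 ≥ 0 and x7 > 0, the determinant of the 2×2 matrix with rows (∂v_g/∂x5, ∂v_z/∂x5) and (v_g, v_z) equals v_g·v_z·x7·(k_ie_g − k_ie_z)/((k_ie_g·x7 + x5)·(k_ie_z·x7 + x5)). Consequently, if k_ie_g ≠ k_ie_z, x3 > 0 and x4 > 0, then the only pair (λ3, λ4) ∈ ℝ² satisfying ∂v_g/∂x5·λ3 + ∂v_z/∂x5·λ4 = 0 and v_g·λ3 + v_z·λ4 = 0 is λ3 = λ4 = 0. -/

import Mathlib

open MeasureTheory Set

/-- Positive constants of the bioreactor uptake kinetics. -/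
structure BioParams where
  vgmax : ℝ
  vzmax : ℝ
  kg : ℝ
  kieg : ℝ
  kz : ℝ
  kiez : ℝ
  kig : ℝ
  vgmax_pos : 0 < vgmax
  vzmax_pos : 0 < vzmax
  kg_pos : 0 < kg
  kieg_pos : 0 < kieg
  kz_pos : 0 < kz
  kiez_pos : 0 < kiez
  kig_pos : 0 < kig

/-- Glucose uptake rate `v_g(x3,x5,x7)`. -/
noncomputable def vg (P : BioParams) (x3 x5 x7 : ℝ) : ℝ :=
  P.vgmax * x3 * x7 / ((P.kg * x7 + x3) * (x7 + x5 / P.kieg))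

/-- Xylose uptake rate `v_z(x3,x4,x5,x7)`. -/
noncomputable def vz (P : BioParams) (x3 x4 x5 x7 : ℝ) : ℝ :=
  P.vzmax * x4 * x7 ^ 2 /
    ((P.kz * x7 + x4) * (x7 + x3 / P.kig) * (x7 + x5 / P.kiez))

/-- `∂v_g/∂x3`. -/
noncomputable def dvg_dx3 (P : BioParams) (x3 x5 x7 : ℝ) : ℝ :=
  deriv (fun y => vg P y x5 x7) x3

/-- `∂v_g/∂x5`. -/
noncomputable def dvg_dx5 (P : BioParams) (x3 x5 x7 : ℝ) : ℝ :=
  deriv (fun y => vg P x3 y x7) x5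

/-- `∂v_g/∂x7`. -/
noncomputable def dvg_dx7 (P : BioParams) (x3 x5 x7 : ℝ) : ℝ :=
  deriv (fun y => vg P x3 x5 y) x7

/-- `∂v_z/∂x3`. -/
noncomputable def dvz_dx3 (P : BioParams) (x3 x4 x5 x7 : ℝ) : ℝ :=
  deriv (fun y => vz P y x4 x5 x7) x3

/-- `∂v_z/∂x4`. -/
noncomputable def dvz_dx4 (P : BioParams) (x3 x4 x5 x7 : ℝ) : ℝ :=
  deriv (fun y => vz P x3 y x5 x7) x4

/-- `∂v_z/∂x5`. -/
noncomputable def dvz_dx5 (P : BioParams) (x3 x4 x5 x7 : ℝ) : ℝ :=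
  deriv (fun y => vz P x3 x4 y x7) x5

/-- `∂v_z/∂x7`. -/
noncomputable def dvz_dx7 (P : BioParams) (x3 x4 x5 x7 : ℝ) : ℝ :=
  deriv (fun y => vz P x3 x4 x5 y) x7


lemma dvg_dx5_eq (P : BioParams) (x3 x5 x7 : ℝ) (h5 : 0 ≤ x5) (h7 : 0 < x7)
    (hA : 0 < P.kg * x7 + x3) :
    dvg_dx5 P x3 x5 x7 =
      -(P.vgmax * x3 * x7 * ((P.kg * x7 + x3) / P.kieg)) /
        ((P.kg * x7 + x3) * (x7 + x5 / P.kieg)) ^ 2 := by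
  have hden : 0 < x7 + x5 / P.kieg :=
    add_pos_of_pos_of_nonneg h7 (div_nonneg h5 P.kieg_pos.le)
  have hg : HasDerivAt (fun y : ℝ => (P.kg * x7 + x3) * (x7 + y / P.kieg))
      ((P.kg * x7 + x3) / P.kieg) x5 := by
    have := (((hasDerivAt_id x5).div_const P.kieg).const_add x7).const_mul
      (P.kg * x7 + x3)
    simpa [mul_div_assoc, div_eq_mul_inv] using this
  have h := ((hasDerivAt_const x5 (P.vgmax * x3 * x7)).div hg
      (by positivity)).deriv
  rw [dvg_dx5]
  simp only [vg, Pi.div_def] at h ⊢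
  rw [h]; ring

lemma dvz_dx5_eq (P : BioParams) (x3 x4 x5 x7 : ℝ) (h3 : 0 ≤ x3) (h5 : 0 ≤ x5)
    (h7 : 0 < x7) (hB : 0 < P.kz * x7 + x4) :
    dvz_dx5 P x3 x4 x5 x7 =
      -(P.vzmax * x4 * x7 ^ 2 * ((P.kz * x7 + x4) * (x7 + x3 / P.kig) / P.kiez)) /
        ((P.kz * x7 + x4) * (x7 + x3 / P.kig) * (x7 + x5 / P.kiez)) ^ 2 := by
  have h1 : 0 < x7 + x3 / P.kig :=
    add_pos_of_pos_of_nonneg h7 (div_nonneg h3 P.kig_pos.le)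
  have h2 : 0 < x7 + x5 / P.kiez :=
    add_pos_of_pos_of_nonneg h7 (div_nonneg h5 P.kiez_pos.le)
  have hg : HasDerivAt
      (fun y : ℝ => (P.kz * x7 + x4) * (x7 + x3 / P.kig) * (x7 + y / P.kiez))
      ((P.kz * x7 + x4) * (x7 + x3 / P.kig) / P.kiez) x5 := by
    have := (((hasDerivAt_id x5).div_const P.kiez).const_add x7).const_mul
      ((P.kz * x7 + x4) * (x7 + x3 / P.kig))
    simpa [mul_div_assoc, div_eq_mul_inv] using this
  have h := ((hasDerivAt_const x5 (P.vzmax * x4 * x7 ^ 2)).div hg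
      (by positivity)).deriv
  rw [dvz_dx5]
  simp only [vz, Pi.div_def] at h ⊢
  rw [h]; ring

/-- for `x3, x4, x5 ≥ 0` and `x7 > 0`, the determinant of the matrix with
rows `(∂v_g/∂x5, ∂v_z/∂x5)` and `(v_g, v_z)` equals
`v_g v_z x7 (k_ie_g - k_ie_z)/((k_ie_g x7 + x5)(k_ie_z x7 + x5))`; consequently, if
`k_ie_g ≠ k_ie_z`, `x3 > 0` and `x4 > 0`, the only solution `(λ3, λ4)` of the
homogeneous system is the trivial one. -/
theorem stmt8 (P : BioParams) (x3 x4 x5 x7 : ℝ)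
    (h3 : 0 ≤ x3) (h4 : 0 ≤ x4) (h5 : 0 ≤ x5) (h7 : 0 < x7) :
    dvg_dx5 P x3 x5 x7 * vz P x3 x4 x5 x7 - dvz_dx5 P x3 x4 x5 x7 * vg P x3 x5 x7 =
      vg P x3 x5 x7 * vz P x3 x4 x5 x7 * x7 * (P.kieg - P.kiez) /
        ((P.kieg * x7 + x5) * (P.kiez * x7 + x5)) ∧
    (P.kieg ≠ P.kiez → 0 < x3 → 0 < x4 →
      ∀ l3 l4 : ℝ,
        dvg_dx5 P x3 x5 x7 * l3 + dvz_dx5 P x3 x4 x5 x7 * l4 = 0 →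
        vg P x3 x5 x7 * l3 + vz P x3 x4 x5 x7 * l4 = 0 →
        l3 = 0 ∧ l4 = 0) := by
  have hkieg := P.kieg_pos
  have hkiez := P.kiez_pos
  have hkig := P.kig_pos
  have hkg := P.kg_pos
  have hkz := P.kz_pos
  have hA : 0 < P.kg * x7 + x3 := add_pos_of_pos_of_nonneg (by positivity) h3
  have hB : 0 < P.kz * x7 + x4 := add_pos_of_pos_of_nonneg (by positivity) h4
  have hC : 0 < x7 + x3 / P.kig :=
    add_pos_of_pos_of_nonneg h7 (div_nonneg h3 hkig.le)
  have hD : 0 < x7 + x5 / P.kieg :=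
    add_pos_of_pos_of_nonneg h7 (div_nonneg h5 hkieg.le)
  have hE : 0 < x7 + x5 / P.kiez :=
    add_pos_of_pos_of_nonneg h7 (div_nonneg h5 hkiez.le)
  have hF : 0 < P.kieg * x7 + x5 := add_pos_of_pos_of_nonneg (by positivity) h5
  have hG : 0 < P.kiez * x7 + x5 := add_pos_of_pos_of_nonneg (by positivity) h5
  have hdg := dvg_dx5_eq P x3 x5 x7 h5 h7 hA
  have hdz := dvz_dx5_eq P x3 x4 x5 x7 h3 h5 h7 hB
  have hdet : dvg_dx5 P x3 x5 x7 * vz P x3 x4 x5 x7 -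
      dvz_dx5 P x3 x4 x5 x7 * vg P x3 x5 x7 =
      vg P x3 x5 x7 * vz P x3 x4 x5 x7 * x7 * (P.kieg - P.kiez) /
        ((P.kieg * x7 + x5) * (P.kiez * x7 + x5)) := by
    rw [hdg, hdz, vg, vz]
    field_simp
    ring
  refine ⟨hdet, fun hne h3' h4' l3 l4 e1 e2 => ?_⟩
  have hvg : 0 < vg P x3 x5 x7 := by
    rw [vg]
    exact div_pos (mul_pos (mul_pos P.vgmax_pos h3') h7) (mul_pos hA hD)
  have hvz : 0 < vz P x3 x4 x5 x7 := by
    rw [vz]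
    exact div_pos (mul_pos (mul_pos P.vzmax_pos h4') (by positivity))
      (mul_pos (mul_pos hB hC) hE)
  have hdet0 : dvg_dx5 P x3 x5 x7 * vz P x3 x4 x5 x7 -
      dvz_dx5 P x3 x4 x5 x7 * vg P x3 x5 x7 ≠ 0 := by
    rw [hdet]
    have hsub : P.kieg - P.kiez ≠ 0 := sub_ne_zero.mpr hne
    exact div_ne_zero
      (mul_ne_zero (mul_ne_zero (mul_ne_zero hvg.ne' hvz.ne') h7.ne') hsub)
      (mul_pos hF hG).ne'
  constructor
  · by_contra hl
    exact hdet0 (by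
      have : (dvg_dx5 P x3 x5 x7 * vz P x3 x4 x5 x7 -
          dvz_dx5 P x3 x4 x5 x7 * vg P x3 x5 x7) * l3 = 0 := by
        linear_combination vz P x3 x4 x5 x7 * e1 - dvz_dx5 P x3 x4 x5 x7 * e2
      exact (mul_eq_zero.mp this).resolve_right hl)
  · by_contra hl
    exact hdet0 (by
      have : (dvg_dx5 P x3 x5 x7 * vz P x3 x4 x5 x7 -
          dvz_dx5 P x3 x4 x5 x7 * vg P x3 x5 x7) * l4 = 0 := by
        linear_combination dvg_dx5 P x3 x5 x7 * e2 - vg P x3 x5 x7 * e1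
      exact (mul_eq_zero.mp this).resolve_right hl)
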